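/- Let p be a prime, n ≥ 1, and E an ultrametric Banach space over ℚ_p. Then the map sending a continuous function f : (ℤ_p)^n → E to its family of Mahler coefficients (a_ν(f))_{ν ∈ ℕ^n} is a bijection from C((ℤ_p)^n, E) onto the space c₀(ℕ^n, E) of families b : ℕ^n → E with ‖b_ν‖ → 0 along the cofinite filter; that is, for every b : ℕ^n → E with ‖b_ν‖ → 0 there is a unique continuous f : (ℤ_p)^n → E whose Mahler coefficients are the b_ν, and moreover sup_{x} ‖f(x)‖ = sup_{ν} ‖b_ν‖ (the bijection is isometric for the supremum norms). -/

import Mathlib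

open Filter

section MahlerMultiAuxSection

open Finset IsUltrametricDist
open scoped fwdDiff ZeroAtInfty

namespace MahlerMultiAux

variable {p : ℕ} [Fact p.Prime] {E : Type*} [NormedAddCommGroup E] [NormedSpace ℚ_[p] E]

noncomputable instance instModZp : Module ℤ_[p] E := Module.compHom E (algebraMap ℤ_[p] ℚ_[p])

instance instBddZp : IsBoundedSMul ℤ_[p] E := IsBoundedSMul.of_norm_smul_le fun r x => by
  show ‖(algebraMap ℤ_[p] ℚ_[p] r) • x‖ ≤ ‖r‖ * ‖x‖
  rw [norm_smul]
  rfl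

noncomputable def mcoef {n : ℕ} (f : C((Fin n → ℤ_[p]), E)) (ν : Fin n → ℕ) : E :=
  ∑ μ ∈ Finset.Iic ν,
    ((-1 : ℚ_[p]) ^ ((∑ i, ν i) - (∑ i, μ i)) * ∏ i, ((ν i).choose (μ i) : ℚ_[p])) •
      f (fun i => ((μ i : ℤ_[p])))

lemma norm_scalar_le {n : ℕ} (e : ℕ) (c : Fin n → ℕ) :
    ‖(-1 : ℚ_[p]) ^ e * ∏ i, (c i : ℚ_[p])‖ ≤ 1 := by
  rw [norm_mul, norm_pow, norm_neg, norm_one, one_pow, one_mul]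
  have : (∏ i, (c i : ℚ_[p])) = ((∏ i, c i : ℕ) : ℚ_[p]) := by push_cast; ring
  rw [this]
  exact_mod_cast Padic.norm_int_le_one ((∏ i, c i : ℕ) : ℤ)

lemma norm_mcoef_le [IsUltrametricDist E] {n : ℕ} (f : C((Fin n → ℤ_[p]), E)) (ν : Fin n → ℕ) :
    ‖mcoef f ν‖ ≤ ‖f‖ := by
  refine norm_sum_le_of_forall_le_of_nonneg (norm_nonneg f) fun μ _ => ?_
  rw [norm_smul]
  calc ‖(-1:ℚ_[p]) ^ _ * ∏ i, ((ν i).choose (μ i) : ℚ_[p])‖ * ‖f _‖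
      ≤ 1 * ‖f _‖ := mul_le_mul_of_nonneg_right (norm_scalar_le _ _) (norm_nonneg _)
    _ ≤ ‖f‖ := by rw [one_mul]; exact f.norm_coe_le_norm _

lemma mcoef_sub [IsUltrametricDist E] {n : ℕ} (f g : C((Fin n → ℤ_[p]), E)) (ν : Fin n → ℕ) :
    mcoef (f - g) ν = mcoef f ν - mcoef g ν := by
  simp only [mcoef, ContinuousMap.sub_apply, smul_sub, Finset.sum_sub_distrib]

lemma mcoef_zero' (f : C((Fin 0 → ℤ_[p]), E)) (ν : Fin 0 → ℕ) : mcoef f ν = f default := by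
  have h : (Finset.Iic ν) = {ν} := by
    ext μ; simp [Subsingleton.elim μ ν]
  rw [mcoef, h, Finset.sum_singleton]
  simp [Subsingleton.elim (fun i => ((ν i : ℤ_[p]))) default]

def consCM (n : ℕ) : C(ℤ_[p] × (Fin n → ℤ_[p]), (Fin (n+1) → ℤ_[p])) where
  toFun q := Fin.cons q.1 q.2
  continuous_toFun := continuous_pi fun i => by
    refine Fin.cases ?_ (fun j => ?_) i
    · simpa only [Fin.cons_zero] using continuous_fst
    · simpa only [Fin.cons_succ, Function.comp_def] using (continuous_apply j).comp continuous_snd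

noncomputable def curryF {n : ℕ} (f : C((Fin (n+1) → ℤ_[p]), E)) :
    C(ℤ_[p], C((Fin n → ℤ_[p]), E)) :=
  (f.comp (consCM n)).curry

lemma curryF_apply {n : ℕ} (f : C((Fin (n+1) → ℤ_[p]), E)) (x : ℤ_[p]) (y : Fin n → ℤ_[p]) :
    curryF f x y = f (Fin.cons x y) := rfl

def splitCM (n : ℕ) : C((Fin (n+1) → ℤ_[p]), ℤ_[p] × (Fin n → ℤ_[p])) where
  toFun z := (z 0, Fin.tail z)
  continuous_toFun := (continuous_apply 0).prodMk (continuous_pi fun j => continuous_apply _)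

noncomputable def uncurryF {n : ℕ} (g : C(ℤ_[p], C((Fin n → ℤ_[p]), E))) :
    C((Fin (n+1) → ℤ_[p]), E) :=
  g.uncurry.comp (splitCM n)

lemma curryF_uncurryF {n : ℕ} (g : C(ℤ_[p], C((Fin n → ℤ_[p]), E))) :
    curryF (uncurryF g) = g := by
  ext x y
  rw [curryF_apply, uncurryF, ContinuousMap.comp_apply]
  simp only [splitCM, ContinuousMap.coe_mk, Fin.cons_zero, Fin.tail_cons,
    ContinuousMap.uncurry_apply, Function.uncurry_apply_pair]

lemma norm_curryF {n : ℕ} (f : C((Fin (n+1) → ℤ_[p]), E)) : ‖curryF f‖ = ‖f‖ := by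
  apply le_antisymm
  · refine (ContinuousMap.norm_le _ (norm_nonneg f)).mpr fun x => ?_
    refine (ContinuousMap.norm_le _ (norm_nonneg f)).mpr fun y => ?_
    exact f.norm_coe_le_norm _
  · refine (ContinuousMap.norm_le _ (norm_nonneg _)).mpr fun z => ?_
    calc ‖f z‖ = ‖curryF f (z 0) (Fin.tail z)‖ := by rw [curryF_apply, Fin.cons_self_tail]
      _ ≤ ‖curryF f (z 0)‖ := (curryF f (z 0)).norm_coe_le_norm _
      _ ≤ ‖curryF f‖ := (curryF f).norm_coe_le_norm _

lemma term_eq {n : ℕ} (f : C((Fin (n+1) → ℤ_[p]), E)) {k j : ℕ} {ν μ : Fin n → ℕ}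
    (hjk : j ≤ k) (hμν : μ ≤ ν) :
    ((-1 : ℚ_[p]) ^ ((∑ i, (Fin.cons k ν : Fin (n+1) → ℕ) i)
          - (∑ i, (Fin.cons j μ : Fin (n+1) → ℕ) i)) *
        ∏ i, (((Fin.cons k ν : Fin (n+1) → ℕ) i).choose
          ((Fin.cons j μ : Fin (n+1) → ℕ) i) : ℚ_[p])) •
      f (fun i => (((Fin.cons j μ : Fin (n+1) → ℕ) i : ℕ) : ℤ_[p]))
    = ((-1 : ℚ_[p]) ^ ((∑ i, ν i) - (∑ i, μ i)) * ∏ i, ((ν i).choose (μ i) : ℚ_[p])) •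
        (((-1 : ℚ_[p]) ^ (k - j) * (k.choose j : ℚ_[p])) •
          f (Fin.cons ((j : ℕ) : ℤ_[p]) (fun i => (μ i : ℤ_[p])))) := by
  have hle : ∑ i, μ i ≤ ∑ i, ν i := Finset.sum_le_sum fun i _ => hμν i
  have hpt : (fun i => (((Fin.cons j μ : Fin (n+1) → ℕ) i : ℕ) : ℤ_[p]))
      = Fin.cons ((j : ℕ) : ℤ_[p]) (fun i => (μ i : ℤ_[p])) :=
    funext fun i => Fin.cases rfl (fun i => by simp) i
  have hprod : (fun i => (((Fin.cons k ν : Fin (n+1) → ℕ) i).choose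
        ((Fin.cons j μ : Fin (n+1) → ℕ) i) : ℚ_[p]))
      = Fin.cons ((k.choose j : ℚ_[p])) (fun i => ((ν i).choose (μ i) : ℚ_[p])) :=
    funext fun i => Fin.cases rfl (fun i => by simp) i
  rw [hpt, smul_smul]
  congr 1
  rw [Fin.sum_cons, Fin.sum_cons]
  have hexp : (k + ∑ i, ν i) - (j + ∑ i, μ i) = (k - j) + ((∑ i, ν i) - (∑ i, μ i)) := by omega
  rw [hexp, hprod, pow_add]
  have : (∏ i, (Fin.cons ((k.choose j : ℚ_[p])) (fun i => ((ν i).choose (μ i) : ℚ_[p])) i))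
      = (k.choose j : ℚ_[p]) * ∏ i, ((ν i).choose (μ i) : ℚ_[p]) := Fin.prod_cons _ _
  rw [this]
  ring

lemma mcoef_cons {n : ℕ} (f : C((Fin (n+1) → ℤ_[p]), E)) (k : ℕ) (ν : Fin n → ℕ) :
    mcoef f (Fin.cons k ν) = mcoef ((Δ_[(1 : ℤ_[p])])^[k] (⇑(curryF f)) 0) ν := by
  have hterm : ∀ (μ : Fin n → ℕ),
      ((Δ_[(1 : ℤ_[p])])^[k] (⇑(curryF f)) 0) (fun i => (μ i : ℤ_[p]))
      = ∑ j ∈ range (k + 1),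
          ((-1 : ℚ_[p]) ^ (k - j) * (k.choose j : ℚ_[p])) •
            f (Fin.cons ((j : ℕ) : ℤ_[p]) (fun i => (μ i : ℤ_[p]))) := by
    intro μ
    rw [fwdDiff_iter_eq_sum_shift]
    simp only [← Int.cast_smul_eq_zsmul ℚ_[p]]
    rw [ContinuousMap.sum_apply]
    refine Finset.sum_congr rfl fun j hj => ?_
    rw [ContinuousMap.smul_apply, curryF_apply]
    have h1 : (0 : ℤ_[p]) + j • (1 : ℤ_[p]) = ((j : ℕ) : ℤ_[p]) := by
      rw [zero_add, nsmul_eq_mul, mul_one]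
    rw [h1]
    congr 1
    push_cast
    ring
  rw [mcoef, mcoef]
  have hrhs : ∑ μ ∈ Finset.Iic ν,
      ((-1 : ℚ_[p]) ^ ((∑ i, ν i) - (∑ i, μ i)) * ∏ i, ((ν i).choose (μ i) : ℚ_[p])) •
        ((Δ_[(1 : ℤ_[p])])^[k] (⇑(curryF f)) 0) (fun i => (μ i : ℤ_[p]))
      = ∑ q ∈ Finset.Iic ν ×ˢ range (k + 1),
          ((-1 : ℚ_[p]) ^ ((∑ i, ν i) - (∑ i, q.1 i)) * ∏ i, ((ν i).choose (q.1 i) : ℚ_[p])) •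
            (((-1 : ℚ_[p]) ^ (k - q.2) * (k.choose q.2 : ℚ_[p])) •
              f (Fin.cons ((q.2 : ℕ) : ℤ_[p]) (fun i => (q.1 i : ℤ_[p])))) := by
    rw [Finset.sum_product]
    exact Finset.sum_congr rfl fun μ _ => by rw [hterm, Finset.smul_sum]
  rw [hrhs]
  refine Finset.sum_nbij' (fun μ' => (Fin.tail μ', μ' 0)) (fun q => Fin.cons q.2 q.1)
    ?_ ?_ ?_ ?_ ?_
  · intro μ' hμ'
    rw [Finset.mem_Iic] at hμ'
    rw [Finset.mem_product, Finset.mem_Iic, Finset.mem_range]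
    constructor
    · intro i
      simpa only [Fin.cons_succ, Fin.tail] using hμ' i.succ
    · have h0 : μ' 0 ≤ k := by simpa only [Fin.cons_zero] using hμ' 0
      exact Nat.lt_succ_of_le h0
  · intro q hq
    rw [Finset.mem_product, Finset.mem_Iic, Finset.mem_range] at hq
    rw [Finset.mem_Iic]
    exact Fin.cons_le_cons.mpr ⟨by omega, hq.1⟩
  · intro μ' _
    exact Fin.cons_self_tail μ'
  · intro q _
    simp only [Fin.tail_cons, Fin.cons_zero]
  · intro μ' hμ'
    rw [Finset.mem_Iic] at hμ'
    have h0 : μ' = Fin.cons (μ' 0) (Fin.tail μ') := (Fin.cons_self_tail μ').symm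
    have hjk : μ' 0 ≤ k := by simpa only [Fin.cons_zero] using hμ' 0
    have hμν : Fin.tail μ' ≤ ν := fun i => by
      simpa only [Fin.cons_succ, Fin.tail] using hμ' i.succ
    calc ((-1 : ℚ_[p]) ^ ((∑ i, (Fin.cons k ν : Fin (n+1) → ℕ) i) - (∑ i, μ' i)) *
            ∏ i, (((Fin.cons k ν : Fin (n+1) → ℕ) i).choose (μ' i) : ℚ_[p])) •
              f (fun i => ((μ' i : ℤ_[p])))
        = ((-1 : ℚ_[p]) ^ ((∑ i, (Fin.cons k ν : Fin (n+1) → ℕ) i)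
              - (∑ i, (Fin.cons (μ' 0) (Fin.tail μ') : Fin (n+1) → ℕ) i)) *
            ∏ i, (((Fin.cons k ν : Fin (n+1) → ℕ) i).choose
              ((Fin.cons (μ' 0) (Fin.tail μ') : Fin (n+1) → ℕ) i) : ℚ_[p])) •
              f (fun i => (((Fin.cons (μ' 0) (Fin.tail μ') : Fin (n+1) → ℕ) i : ℕ) : ℤ_[p])) := by
          rw [← h0]
      _ = _ := term_eq f hjk hμν

lemma tendsto_cof_iff {α : Type*} (u : α → ℝ) (hu : ∀ x, 0 ≤ u x) :
    Tendsto u cofinite (nhds 0) ↔ ∀ ε > 0, {x | ε ≤ u x}.Finite := by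
  rw [Metric.tendsto_nhds]
  constructor
  · intro H ε hε
    have h1 := H ε hε
    rw [eventually_cofinite] at h1
    refine h1.subset fun x hx => ?_
    simp only [Set.mem_setOf_eq, Real.dist_eq, sub_zero, abs_of_nonneg (hu x), not_lt] at *
    exact hx
  · intro H ε hε
    rw [eventually_cofinite]
    refine (H ε hε).subset fun x hx => ?_
    simp only [Set.mem_setOf_eq, Real.dist_eq, sub_zero, abs_of_nonneg (hu x), not_lt] at *
    exact hx

variable [IsUltrametricDist E] [CompleteSpace E]

theorem main (n : ℕ) :
    (∀ f : C((Fin n → ℤ_[p]), E), Tendsto (fun ν => ‖mcoef f ν‖) cofinite (nhds 0)) ∧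
    (∀ b : (Fin n → ℕ) → E, Tendsto (fun ν => ‖b ν‖) cofinite (nhds 0) →
        ∃ f : C((Fin n → ℤ_[p]), E), mcoef f = b) ∧
    (∀ f : C((Fin n → ℤ_[p]), E), ‖f‖ = ⨆ ν, ‖mcoef f ν‖) := by
  induction n with
  | zero =>
    refine ⟨fun f => ?_, fun b hb => ?_, fun f => ?_⟩
    · rw [Filter.cofinite_eq_bot]; exact tendsto_bot
    · exact ⟨ContinuousMap.const _ (b default), funext fun ν => by
        rw [mcoef_zero', ContinuousMap.const_apply]
        exact congrArg b (Subsingleton.elim _ _)⟩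
    · rw [ContinuousMap.norm_eq_iSup_norm, ciSup_unique, ciSup_unique, mcoef_zero']
      exact congrArg (‖·‖) (congrArg f (Subsingleton.elim _ _))
  | succ n ih =>
    obtain ⟨A, Bex, C⟩ := ih
    have key : ∀ (f : C((Fin (n+1) → ℤ_[p]), E)) (μ : Fin (n+1) → ℕ),
        mcoef f μ = mcoef ((Δ_[(1 : ℤ_[p])])^[μ 0] (⇑(curryF f)) 0) (Fin.tail μ) := by
      intro f μ
      conv_lhs => rw [← Fin.cons_self_tail μ]
      exact mcoef_cons f (μ 0) (Fin.tail μ)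
    have hdecay : ∀ f : C((Fin (n+1) → ℤ_[p]), E),
        Tendsto (fun k => ‖(Δ_[(1 : ℤ_[p])])^[k] (⇑(curryF f)) 0‖) cofinite (nhds 0) := by
      intro f
      rw [Nat.cofinite_eq_atTop]
      exact tendsto_zero_iff_norm_tendsto_zero.mp (PadicInt.fwdDiff_tendsto_zero (curryF f))
    refine ⟨fun f => ?_, fun b hb => ?_, fun f => ?_⟩
    · rw [tendsto_cof_iff _ (fun _ => norm_nonneg _)]
      intro ε hε
      have hK : {k | ε ≤ ‖(Δ_[(1 : ℤ_[p])])^[k] (⇑(curryF f)) 0‖}.Finite :=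
        (tendsto_cof_iff _ (fun _ => norm_nonneg _)).mp (hdecay f) ε hε
      have hT : ∀ k, {ν | ε ≤ ‖mcoef ((Δ_[(1 : ℤ_[p])])^[k] (⇑(curryF f)) 0) ν‖}.Finite :=
        fun k => (tendsto_cof_iff _ (fun _ => norm_nonneg _)).mp
          (A ((Δ_[(1 : ℤ_[p])])^[k] (⇑(curryF f)) 0)) ε hε
      have himg : ∀ k, ((fun ν : Fin n → ℕ => (Fin.cons k ν : Fin (n+1) → ℕ)) ''
          {ν | ε ≤ ‖mcoef ((Δ_[(1 : ℤ_[p])])^[k] (⇑(curryF f)) 0) ν‖}).Finite :=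
        fun k => (hT k).image _
      refine Set.Finite.subset (Set.Finite.biUnion hK (fun k _ => himg k)) ?_
      intro μ hμ
      simp only [Set.mem_setOf_eq] at hμ
      rw [key f μ] at hμ
      have h1 : ε ≤ ‖(Δ_[(1 : ℤ_[p])])^[μ 0] (⇑(curryF f)) 0‖ :=
        le_trans hμ (norm_mcoef_le _ _)
      exact Set.mem_biUnion h1 ⟨Fin.tail μ, hμ, Fin.cons_self_tail μ⟩
    · have hb' : ∀ k, Tendsto (fun ν => ‖b (Fin.cons k ν)‖) cofinite (nhds 0) := by
        intro k
        rw [tendsto_cof_iff _ (fun _ => norm_nonneg _)] at hb ⊢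
        intro ε hε
        have hset : {ν : Fin n → ℕ | ε ≤ ‖b (Fin.cons k ν)‖}
            = (fun ν : Fin n → ℕ => (Fin.cons k ν : Fin (n+1) → ℕ)) ⁻¹' {μ | ε ≤ ‖b μ‖} := by
          ext ν; simp [Set.mem_preimage]
        rw [hset]
        exact (hb ε hε).preimage
          (Function.Injective.injOn fun x y hxy =>
            Fin.cons_right_injective (α := fun _ : Fin (n+1) => ℕ) k hxy)
      choose c hc using fun k => Bex _ (hb' k)
      have hnorm : ∀ k, ‖c k‖ = ⨆ ν, ‖b (Fin.cons k ν)‖ := fun k => by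
        rw [C (c k), hc k]
      have hcnorm : Tendsto (fun k => ‖c k‖) cofinite (nhds 0) := by
        rw [tendsto_cof_iff _ (fun _ => norm_nonneg _)]
        intro ε hε
        have hB : {μ | ε/2 ≤ ‖b μ‖}.Finite :=
          (tendsto_cof_iff _ (fun _ => norm_nonneg _)).mp hb (ε/2) (by linarith)
        refine (hB.image (fun μ => μ 0)).subset ?_
        intro k hk
        simp only [Set.mem_setOf_eq] at hk
        by_contra hk'
        have hbound : ∀ ν, ‖b (Fin.cons k ν)‖ ≤ ε/2 := by
          intro ν
          by_contra h
          push_neg at h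
          exact hk' ⟨(Fin.cons k ν : Fin (n+1) → ℕ), le_of_lt h, Fin.cons_zero _ _⟩
        have h2 : ‖c k‖ ≤ ε/2 := by
          rw [hnorm k]; exact ciSup_le hbound
        linarith
      have hc0 : Tendsto c cofinite (nhds 0) :=
        tendsto_zero_iff_norm_tendsto_zero.mpr hcnorm
      let h0 : C₀(ℕ, C((Fin n → ℤ_[p]), E)) :=
        ⟨⟨c, continuous_of_discreteTopology⟩, by
          rw [cocompact_eq_atTop (α := ℕ)]
          exact Nat.cofinite_eq_atTop ▸ hc0⟩
      let g := (PadicInt.mahlerEquiv (p := p) (C((Fin n → ℤ_[p]), E))).symm h0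
      have hg : ∀ k, (Δ_[(1 : ℤ_[p])])^[k] (⇑g) 0 = c k := by
        intro k
        have h1 := (PadicInt.mahlerEquiv (p := p) (C((Fin n → ℤ_[p]), E))).apply_symm_apply h0
        exact DFunLike.congr_fun h1 k
      refine ⟨uncurryF g, funext fun μ => ?_⟩
      calc mcoef (uncurryF g) μ
          = mcoef ((Δ_[(1 : ℤ_[p])])^[μ 0] (⇑(curryF (uncurryF g))) 0) (Fin.tail μ) := key _ μ
        _ = mcoef (c (μ 0)) (Fin.tail μ) := by rw [curryF_uncurryF, hg]
        _ = b (Fin.cons (μ 0) (Fin.tail μ)) := congrFun (hc (μ 0)) _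
        _ = b μ := by rw [Fin.cons_self_tail]
    · have hbdd : BddAbove (Set.range fun μ : Fin (n+1) → ℕ => ‖mcoef f μ‖) :=
        ⟨‖f‖, by rintro _ ⟨μ, rfl⟩; exact norm_mcoef_le f μ⟩
      refine le_antisymm ?_ (ciSup_le fun μ => norm_mcoef_le f μ)
      rw [← norm_curryF f, ← (PadicInt.mahlerEquiv _).norm_map (curryF f),
          ← ZeroAtInftyContinuousMap.norm_toBCF_eq_norm]
      refine BoundedContinuousFunction.norm_le_of_nonempty.mpr fun k => ?_
      show ‖(Δ_[(1 : ℤ_[p])])^[k] (⇑(curryF f)) 0‖ ≤ _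
      rw [C ((Δ_[(1 : ℤ_[p])])^[k] (⇑(curryF f)) 0)]
      refine ciSup_le fun ν => ?_
      rw [← mcoef_cons]
      exact le_ciSup hbdd (Fin.cons k ν)

end MahlerMultiAux

end MahlerMultiAuxSection

/-- **Mahler's theorem in several variables, Banach case** (Lemma `strongMahcts`).
For `E` an ultrametric `ℚ_p`-Banach space, the map sending a continuous function
`f : (ℤ_p)^n → E` to its family of Mahler coefficients is a bijection onto
`c₀(ℕ^n, E)`, isometric for the supremum norms. -/
theorem mahler_equiv_banach (p : ℕ) [Fact p.Prime] (n : ℕ) (hn : 1 ≤ n)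
    (E : Type*) [NormedAddCommGroup E] [NormedSpace ℚ_[p] E] [IsUltrametricDist E]
    [CompleteSpace E]
    (coeff : C((Fin n → ℤ_[p]), E) → (Fin n → ℕ) → E)
    (hcoeff : ∀ (f : C((Fin n → ℤ_[p]), E)) (ν : Fin n → ℕ),
      coeff f ν = ∑ μ ∈ Finset.Iic ν,
        ((-1 : ℚ_[p]) ^ ((∑ i, ν i) - (∑ i, μ i)) * ∏ i, ((ν i).choose (μ i) : ℚ_[p])) •
          f (fun i => ((μ i : ℤ_[p])))) :
    (∀ f : C((Fin n → ℤ_[p]), E),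
        Tendsto (fun ν : Fin n → ℕ => ‖coeff f ν‖) cofinite (nhds 0)) ∧
    (∀ b : (Fin n → ℕ) → E, Tendsto (fun ν => ‖b ν‖) cofinite (nhds 0) →
        ∃! f : C((Fin n → ℤ_[p]), E), coeff f = b) ∧
    (∀ f : C((Fin n → ℤ_[p]), E),
        (⨆ x : Fin n → ℤ_[p], ‖f x‖) = ⨆ ν : Fin n → ℕ, ‖coeff f ν‖) := by
  have hmc : ∀ f, coeff f = MahlerMultiAux.mcoef f := fun f => funext fun ν => by
    rw [hcoeff f ν, MahlerMultiAux.mcoef]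
  obtain ⟨A, Bex, C⟩ := MahlerMultiAux.main (p := p) (E := E) n
  refine ⟨fun f => by rw [hmc]; exact A f, fun b hb => ?_, fun f => ?_⟩
  · obtain ⟨f, hf⟩ := Bex b hb
    refine ⟨f, show coeff f = b by rw [hmc]; exact hf, fun f' hf' => ?_⟩
    have hf2 : coeff f' = b := hf'
    rw [hmc] at hf2
    have hz : ∀ ν, MahlerMultiAux.mcoef (f' - f) ν = 0 := fun ν => by
      rw [MahlerMultiAux.mcoef_sub, hf2, hf, sub_self]
    have hn0 : ‖f' - f‖ = 0 := by
      rw [C (f' - f)]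
      simp only [hz, norm_zero, ciSup_const]
    exact sub_eq_zero.mp (norm_eq_zero.mp hn0)
  · rw [hmc f, ← ContinuousMap.norm_eq_iSup_norm]
    exact C f
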